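/- Let (X,+) be an Abelian Polish group, A a translation-invariant σ-algebra on X containing all Borel sets, and I a translation-invariant σ-ideal on X containing all singletons such that every member of I is contained in a member of A ∩ I. Then the pair (A, I) has the Steinhaus Property if and only if it has the Smital Property. -/

import Mathlib

open scoped Pointwise

/-- `I` is a σ-ideal: contains singletons, closed under subsets and countable unions. -/
def IsSigmaIdeal {X : Type*} (I : Set (Set X)) : Prop :=
  (∀ x : X, {x} ∈ I) ∧
  (∀ A ∈ I, ∀ B : Set X, B ⊆ A → B ∈ I) ∧
  (∀ f : ℕ → Set X, (∀ n, f n ∈ I) → (⋃ n, f n) ∈ I)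

/-- for a translation-invariant σ-algebra `𝒜` containing all Borel sets and a
translation-invariant σ-ideal `I` on an Abelian Polish group, with every member of `I`
contained in a member of `𝒜 ∩ I`, the Steinhaus property of `(𝒜, I)` is equivalent to
the Smital property. -/
theorem steinhaus_iff_smital
    {X : Type*} [TopologicalSpace X] [PolishSpace X] [AddCommGroup X]
    [IsTopologicalAddGroup X] [MeasurableSpace X] [BorelSpace X]
    (𝒜 : Set (Set X)) (I : Set (Set X))
    (h𝒜univ : Set.univ ∈ 𝒜)
    (h𝒜compl : ∀ A ∈ 𝒜, Aᶜ ∈ 𝒜)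
    (h𝒜union : ∀ f : ℕ → Set X, (∀ n, f n ∈ 𝒜) → (⋃ n, f n) ∈ 𝒜)
    (h𝒜borel : ∀ B : Set X, MeasurableSet B → B ∈ 𝒜)
    (h𝒜inv : ∀ A ∈ 𝒜, ∀ x : X, (fun a => x + a) '' A ∈ 𝒜)
    (hI : IsSigmaIdeal I)
    (hIinv : ∀ A ∈ I, ∀ x : X, (fun a => x + a) '' A ∈ I)
    (hbase : ∀ A ∈ I, ∃ B ∈ 𝒜 ∩ I, A ⊆ B) :
    (∀ A ∈ 𝒜, A ∉ I → ∀ B ∈ 𝒜, B ∉ I → (interior (A - B)).Nonempty) ↔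
    (∀ D : Set X, Dense D → ∀ A ∈ 𝒜, A ∉ I → (A + D)ᶜ ∈ I) := by
  obtain ⟨-, hIsub, hIunion⟩ := hI
  constructor
  · -- Steinhaus → Smital
    intro hSt D hD A hA hAI
    -- countable dense subset of D
    obtain ⟨D₀, hD₀D, hD₀c, hD₀d⟩ := hD.exists_countable_dense_subset
    rcases D₀.eq_empty_or_nonempty with hDe | hDne
    · -- X is empty: contradiction using Steinhaus on A, A
      obtain ⟨x, -⟩ := hSt A hA hAI A hA hAI
      exact absurd (hD₀d x) (by simp [hDe])
    obtain ⟨e, he⟩ := hD₀c.exists_eq_range hDne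
    set S : Set X := ⋃ n, (fun a => e n + a) '' A with hS
    have hSmem : S ∈ 𝒜 := h𝒜union _ fun n => h𝒜inv A hA (e n)
    -- (A + D)ᶜ ⊆ Sᶜ
    have hsub : (A + D)ᶜ ⊆ Sᶜ := by
      intro x hx hxS
      apply hx
      obtain ⟨n, a, haA, rfl⟩ := Set.mem_iUnion.1 hxS
      have hen : e n ∈ D := hD₀D (he ▸ Set.mem_range_self n)
      exact ⟨a, haA, e n, hen, add_comm a (e n)⟩
    -- it suffices to show Sᶜ ∈ I
    have hScI : Sᶜ ∈ I := by
      by_contra hSc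
      obtain ⟨v, hv⟩ := hSt A hA hAI Sᶜ (h𝒜compl S hSmem) hSc
      -- -interior(A - Sᶜ) is open nonempty; D₀ dense meets it
      have hopen : IsOpen (Neg.neg ⁻¹' interior (A - Sᶜ) : Set X) :=
        isOpen_interior.preimage continuous_neg
      have hne : (Neg.neg ⁻¹' interior (A - Sᶜ) : Set X).Nonempty :=
        ⟨-v, by simpa using hv⟩
      obtain ⟨d, hdD₀, hd⟩ := hD₀d.exists_mem_open hopen hne
      have hdmem : -d ∈ A - Sᶜ := interior_subset hd
      obtain ⟨a, haA, s, hsSc, has⟩ := Set.mem_sub.1 hdmem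
      apply hsSc
      have hs : s = d + a := by
        rw [sub_eq_iff_eq_add] at has
        rw [has, add_neg_cancel_left]
      rw [hs]
      have : ∃ n, e n = d := by
        have : d ∈ Set.range e := he ▸ hdD₀
        exact this
      obtain ⟨n, rfl⟩ := this
      exact Set.mem_iUnion.2 ⟨n, a, haA, rfl⟩
    exact hIsub _ hScI _ hsub
  · -- Smital → Steinhaus
    intro hSm A hA hAI B hB hBI
    by_contra hint
    have hie : interior (A - B) = ∅ := Set.not_nonempty_iff_eq_empty.1 hint
    have hdense : Dense ((A - B)ᶜ) := interior_eq_empty_iff_dense_compl.1 hie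
    -- D = -( (A-B)ᶜ ) is dense
    set D : Set X := Neg.neg ⁻¹' (A - B)ᶜ with hDdef
    have hDdense : Dense D := by
      intro x
      have := hdense (-x)
      rw [mem_closure_iff] at this ⊢
      intro U hU hxU
      have hU' : IsOpen (Neg.neg ⁻¹' U : Set X) := hU.preimage continuous_neg
      obtain ⟨y, hyU, hy⟩ := this _ hU' (by simpa using hxU)
      refine ⟨-y, hyU, ?_⟩
      show -(-y) ∈ (A - B)ᶜ
      simpa using hy
    have hI' : (A + D)ᶜ ∈ I := hSm D hDdense A hA hAI
    have : ¬ B ⊆ (A + D)ᶜ := fun h => hBI (hIsub _ hI' _ h)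
    obtain ⟨b, hbB, hb⟩ := Set.not_subset.1 this
    rw [Set.notMem_compl_iff] at hb
    obtain ⟨a, haA, d, hdD, had⟩ := Set.mem_add.1 hb
    have hd2 : d = b - a := by rw [eq_sub_iff_add_eq, add_comm]; exact had
    have : -d ∈ A - B := by rw [hd2, neg_sub]; exact Set.sub_mem_sub haA hbB
    exact hdD this
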